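/- For every NCM M there exist an NPCM M' whose pushdown makes zero reversals (it never pops) and a fixed word f Z0, where f is a state of M' and Z0 is the bottom-of-stack marker, such that the left quotient (f Z0)^{-1} S(M') equals L(M). -/
import Mathlib


/-!
Common formalization of reversal-bounded counter machines (NCM/DCM), pushdown
machines augmented with reversal-bounded counters (NPCM), `r`-flip NPCMs,
machines with one unrestricted counter plus reversal-bounded counters (NCACM),
stack automata (NSA), two-tape NCMs, multi-head NFAs, generalized sequential
machines (gsm), store languages/configurations, reachability (`pre*`/`post*`),
regular languages, Parikh maps, semilinearity, and trios.
-/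

namespace StoreFormal

/-- Regular languages: accepted by a DFA with finitely many states. -/
def IsRegularLang {α : Type} (L : Set (List α)) : Prop :=
  ∃ (σ : Type) (_ : Fintype σ) (M : DFA α σ), M.accepts = L

/-- One step of a reversal-bounded counter.  `v` is the current value, `dir` is
the current phase (`true` = nondecreasing phase), `rev` the number of reversals
made so far.  The result is the new value/phase/reversal count, or `none` if the
move is impossible (decrementing a zero counter). -/
def ctrStep (v : ℕ) (dir : Bool) (rev : ℕ) : SignType → Option (ℕ × Bool × ℕ)
  | SignType.zero => some (v, dir, rev)
  | SignType.pos => some (v + 1, true, if dir then rev else rev + 1)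
  | SignType.neg => if v = 0 then none else some (v - 1, false, if dir then rev + 1 else rev)

/-! ### NCM : one-way nondeterministic machines with `k` reversal-bounded counters -/

/-- A one-way nondeterministic finite automaton with `k` reversal-bounded
counters.  A transition depends on the state, the input symbol read (`none` = λ),
and the zero/nonzero status of each counter (`true` = nonzero); it yields a new
state and a `-1/0/+1` change for each counter.  In every computation each
counter may make at most `revBound` reversals. -/
structure NCM (α Q : Type) (k : ℕ) where
  q0 : Q
  F : Set Q
  revBound : ℕ
  δ : Q → Option α → (Fin k → Bool) → Set (Q × (Fin k → SignType))

/-- A configuration of a counter machine: state, counter values, and the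
bookkeeping of each counter's phase and number of reversals made so far. -/
structure CConfig (Q : Type) (k : ℕ) where
  st : Q
  ctr : Fin k → ℕ
  dir : Fin k → Bool
  rev : Fin k → ℕ

namespace NCM

variable {α Q : Type} {k : ℕ}

/-- Initial configuration: initial state, all counters zero. -/
def initConfig (M : NCM α Q k) : CConfig Q k :=
  ⟨M.q0, fun _ => 0, fun _ => true, fun _ => 0⟩

/-- One move of an NCM, reading `a` (`none` = λ). -/
def Step (M : NCM α Q k) (a : Option α) (c c' : CConfig Q k) : Prop :=
  ∃ d : Fin k → SignType,
    (c'.st, d) ∈ M.δ c.st a (fun i => decide (c.ctr i ≠ 0)) ∧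
    ∀ i, ctrStep (c.ctr i) (c.dir i) (c.rev i) (d i) = some (c'.ctr i, c'.dir i, c'.rev i)
      ∧ c'.rev i ≤ M.revBound

/-- `Reach M c w c'` : the machine can go from configuration `c` to `c'`
reading exactly the input word `w`. -/
inductive Reach (M : NCM α Q k) : CConfig Q k → List α → CConfig Q k → Prop
  | refl (c) : Reach M c [] c
  | lstep {c c' c'' w} : M.Step none c c' → Reach M c' w c'' → Reach M c w c''
  | rstep {c c' c'' a w} : M.Step (some a) c c' → Reach M c' w c'' → Reach M c (a :: w) c''

/-- The language accepted by an NCM (acceptance by final state after reading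
the entire input). -/
def lang (M : NCM α Q k) : Set (List α) :=
  { w | ∃ c, M.Reach M.initConfig w c ∧ c.st ∈ M.F }

/-- Determinism of a counter machine: at most one move for each state, input
symbol (or λ) and tuple of counter statuses, and λ-moves do not conflict with
reading moves. -/
def Deterministic (M : NCM α Q k) : Prop :=
  (∀ q a s, ∀ t₁ ∈ M.δ q a s, ∀ t₂ ∈ M.δ q a s, t₁ = t₂) ∧
  (∀ q s, (M.δ q none s).Nonempty → ∀ a, M.δ q (some a) s = ∅)

end NCM

/-- `L ∈ 𝓛(NCM)` : `L` is accepted by some NCM with finitely many states. -/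
def IsNCMLang {α : Type} (L : Set (List α)) : Prop :=
  ∃ (Q : Type) (_ : Fintype Q) (k : ℕ) (M : NCM α Q k), M.lang = L

/-- `L ∈ 𝓛(DCM)` : `L` is accepted by some deterministic NCM with finitely
many states. -/
def IsDCMLang {α : Type} (L : Set (List α)) : Prop :=
  ∃ (Q : Type) (_ : Fintype Q) (k : ℕ) (M : NCM α Q k), M.Deterministic ∧ M.lang = L

/-- Left quotient of a language by a single word: `w⁻¹L = { y : w ++ y ∈ L }`. -/
def leftQuot {α : Type} (w : List α) (L : Set (List α)) : Set (List α) :=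
  { y | w ++ y ∈ L }

/-! ### NPCM : NCMs augmented with a pushdown (and possibly `flipBound` flips) -/

/-- An NPCM with `k` reversal-bounded counters (and, when `flipBound = r > 0`,
an `r`-flip NPCM).  A transition reads the state, the input symbol (or λ), the
top stack symbol and the counter statuses, and yields a new state, an action on
the pushdown (`some w` : replace the top symbol by the word `w`, written with
its first symbol the new top; `none` : flip the pushdown above `Z0`) and
counter changes.  The bottom marker `Z0` is never popped or overwritten and
never occurs elsewhere in the stack.  A plain NPCM is one with `flipBound = 0`;
an NPDA is an NPCM with `k = 0`. -/
structure NPCM (α Γ Q : Type) (k : ℕ) where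
  q0 : Q
  Z0 : Γ
  F : Set Q
  revBound : ℕ
  flipBound : ℕ
  δ : Q → Option α → Γ → (Fin k → Bool) → Set (Q × Option (List Γ) × (Fin k → SignType))
  finδ : ∀ q a X s, (δ q a X s).Finite
  z0_bottom : ∀ q a s p w d, (p, some w, d) ∈ δ q a Z0 s → ∃ u, w = u ++ [Z0] ∧ Z0 ∉ u
  z0_inner : ∀ q a X s p w d, X ≠ Z0 → (p, some w, d) ∈ δ q a X s → Z0 ∉ w

/-- A configuration of an NPCM: state, stack contents (top of stack first, so
the last entry is `Z0`), counter values, reversal bookkeeping, and the number of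
flips performed so far. -/
structure PConfig (Γ Q : Type) (k : ℕ) where
  st : Q
  stk : List Γ
  ctr : Fin k → ℕ
  dir : Fin k → Bool
  rev : Fin k → ℕ
  flips : ℕ

/-- The alphabet over which store-configuration strings of an NPCM are written:
states, stack symbols, and one distinct unary symbol `cᵢ` for each counter. -/
abbrev StoreSym (Γ Q : Type) (k : ℕ) := Q ⊕ Γ ⊕ Fin k

/-- The store-configuration string `q γ c₁^{i₁} ⋯ c_k^{i_k}` of a configuration:
the state, then the stack contents written bottom-up (so starting with `Z0`),
then the counter values in unary. -/
def confStr {Γ Q : Type} {k : ℕ} (c : PConfig Γ Q k) : List (StoreSym Γ Q k) :=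
  Sum.inl c.st :: (c.stk.reverse.map (fun X => Sum.inr (Sum.inl X)) ++
    (List.finRange k).flatMap (fun i => List.replicate (c.ctr i) (Sum.inr (Sum.inr i))))

namespace NPCM

variable {α Γ Q : Type} {k : ℕ}

/-- Initial configuration: initial state, stack `Z0`, all counters zero. -/
def initConfig (M : NPCM α Γ Q k) : PConfig Γ Q k :=
  ⟨M.q0, [M.Z0], fun _ => 0, fun _ => true, fun _ => 0, 0⟩

/-- One move of an NPCM, reading `a` (`none` = λ). -/
def Step (M : NPCM α Γ Q k) (a : Option α) (c c' : PConfig Γ Q k) : Prop :=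
  ∃ X rest act d, c.stk = X :: rest ∧
    (c'.st, act, d) ∈ M.δ c.st a X (fun i => decide (c.ctr i ≠ 0)) ∧
    (∀ i, ctrStep (c.ctr i) (c.dir i) (c.rev i) (d i) = some (c'.ctr i, c'.dir i, c'.rev i)
      ∧ c'.rev i ≤ M.revBound) ∧
    c'.flips ≤ M.flipBound ∧
    (match act with
     | some w => c'.stk = w ++ rest ∧ c'.flips = c.flips
     | none => (∃ u, c.stk = u ++ [M.Z0] ∧ c'.stk = u.reverse ++ [M.Z0]) ∧
         c'.flips = c.flips + 1)

/-- `Reach M c w c'` : the machine can go from configuration `c` to `c'`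
reading exactly the input word `w`. -/
inductive Reach (M : NPCM α Γ Q k) : PConfig Γ Q k → List α → PConfig Γ Q k → Prop
  | refl (c) : Reach M c [] c
  | lstep {c c' c'' w} : M.Step none c c' → Reach M c' w c'' → Reach M c w c''
  | rstep {c c' c'' a w} : M.Step (some a) c c' → Reach M c' w c'' → Reach M c (a :: w) c''

/-- `c ⇒* c'` : `c'` is reachable from `c` on some input. -/
def reachesFrom (M : NPCM α Γ Q k) (c c' : PConfig Γ Q k) : Prop :=
  ∃ w, M.Reach c w c'

/-- `c` is reachable from the initial configuration. -/
def InitReach (M : NPCM α Γ Q k) (c : PConfig Γ Q k) : Prop :=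
  M.reachesFrom M.initConfig c

/-- From `c` some accepting configuration is reachable. -/
def CoAcc (M : NPCM α Γ Q k) (c : PConfig Γ Q k) : Prop :=
  ∃ c', M.reachesFrom c c' ∧ c'.st ∈ M.F

/-- The language accepted by an NPCM. -/
def lang (M : NPCM α Γ Q k) : Set (List α) :=
  { w | ∃ c, M.Reach M.initConfig w c ∧ c.st ∈ M.F }

/-- The store language `S(M)` : all store-configuration strings occurring in
some accepting computation. -/
def storeLang (M : NPCM α Γ Q k) : Set (List (StoreSym Γ Q k)) :=
  { x | ∃ c, M.InitReach c ∧ M.CoAcc c ∧ confStr c = x }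

/-- `acc_M(q)` : store configurations with state `q` reachable from the initial
configuration. -/
def accSet (M : NPCM α Γ Q k) (q : Q) : Set (List (StoreSym Γ Q k)) :=
  { x | ∃ c, M.InitReach c ∧ c.st = q ∧ confStr c = x }

/-- `coacc_M(q)` : store configurations with state `q` from which an accepting
configuration is reachable. -/
def coaccSet (M : NPCM α Γ Q k) (q : Q) : Set (List (StoreSym Γ Q k)) :=
  { x | ∃ c, M.CoAcc c ∧ c.st = q ∧ confStr c = x }

/-- `acc_{q,l}(M)` : store configurations with state `q` reachable from the
initial configuration using at most `l` flips. -/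
def accFlip (M : NPCM α Γ Q k) (q : Q) (l : ℕ) : Set (List (StoreSym Γ Q k)) :=
  { x | ∃ c, M.InitReach c ∧ c.st = q ∧ c.flips ≤ l ∧ confStr c = x }

/-- `coacc_{q,l}(M)` : store configurations with state `q` from which an
accepting configuration is reachable using at most `l` further flips. -/
def coaccFlip (M : NPCM α Γ Q k) (q : Q) (l : ℕ) : Set (List (StoreSym Γ Q k)) :=
  { x | ∃ c c', M.reachesFrom c c' ∧ c'.st ∈ M.F ∧ c'.flips ≤ c.flips + l ∧
      c.st = q ∧ confStr c = x }

/-- `pre*_M(C)` : store configurations from which some member of `C` is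
reachable. -/
def PreStar (M : NPCM α Γ Q k) (C : Set (List (StoreSym Γ Q k))) :
    Set (List (StoreSym Γ Q k)) :=
  { x | ∃ c c', confStr c = x ∧ M.reachesFrom c c' ∧ confStr c' ∈ C }

/-- `post*_M(C)` : store configurations reachable from some member of `C`. -/
def PostStar (M : NPCM α Γ Q k) (C : Set (List (StoreSym Γ Q k))) :
    Set (List (StoreSym Γ Q k)) :=
  { y | ∃ c c', confStr c ∈ C ∧ M.reachesFrom c c' ∧ confStr c' = y }

/-- The normal form of Lemma 1:
1. all counters are 1-reversal-bounded in every computation;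
2. the states used before and after each counter reversal are disjoint;
3. from the initial state `q0` all counters immediately increase while keeping
   `Z0` on the pushdown, moving to a new state `q0'`;
4. the machine accepts only in a unique final state with all counters zero and
   the pushdown containing only `Z0`;
5. every pushdown transition pops the top symbol, replaces the top symbol by a
   single symbol, or pushes one new symbol on top of the unchanged old one. -/
def NormalForm (M : NPCM α Γ Q k) : Prop :=
  (∀ c, M.InitReach c → ∀ i, c.rev i ≤ 1) ∧
  (∀ (i : Fin k) c c', M.InitReach c → M.InitReach c' →
      c.rev i = 0 → 1 ≤ c'.rev i → c.st ≠ c'.st) ∧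
  (∃ q0' : Q, q0' ≠ M.q0 ∧ ∀ a s p act d,
      (p, act, d) ∈ M.δ M.q0 a M.Z0 s →
        p = q0' ∧ act = some [M.Z0] ∧ ∀ i, d i = SignType.pos) ∧
  (∃ f : Q, M.F = {f} ∧ ∀ c, M.InitReach c → c.st ∈ M.F →
      c.stk = [M.Z0] ∧ ∀ i, c.ctr i = 0) ∧
  (∀ q a X s p w d, (p, some w, d) ∈ M.δ q a X s →
      w = [] ∨ (∃ Y, w = [Y]) ∨ (∃ Y, w = [Y, X]))

/-- `T_a(M)` : pairs of store configurations `(c₁, c₂)` such that `c₂` is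
reachable from `c₁` in some accepting computation. -/
def TaSet (M : NPCM α Γ Q k) :
    Set (List (StoreSym Γ Q k) × List (StoreSym Γ Q k)) :=
  { p | ∃ c₁ c₂, M.InitReach c₁ ∧ M.reachesFrom c₁ c₂ ∧ M.CoAcc c₂ ∧
      confStr c₁ = p.1 ∧ confStr c₂ = p.2 }

/-- `T_a^R(M)` : like `T_a(M)` but with the second configuration reversed. -/
def TaRSet (M : NPCM α Γ Q k) :
    Set (List (StoreSym Γ Q k) × List (StoreSym Γ Q k)) :=
  { p | ∃ c₁ c₂, M.InitReach c₁ ∧ M.reachesFrom c₁ c₂ ∧ M.CoAcc c₂ ∧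
      confStr c₁ = p.1 ∧ (confStr c₂).reverse = p.2 }

/-- `PAIR(M) = { c₁ # c₂ : (c₁, c₂) ∈ T_a(M) }`, with the marker `#` encoded as
`none` over the extended alphabet `Option (StoreSym Γ Q k)`. -/
def PAIRSet (M : NPCM α Γ Q k) : Set (List (Option (StoreSym Γ Q k))) :=
  { z | ∃ c₁ c₂, M.InitReach c₁ ∧ M.reachesFrom c₁ c₂ ∧ M.CoAcc c₂ ∧
      z = (confStr c₁).map some ++ none :: (confStr c₂).map some }

/-- `PAIR^R(M) = { c₁ # c₂^R : (c₁, c₂) ∈ T_a(M) }`. -/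
def PAIRRSet (M : NPCM α Γ Q k) : Set (List (Option (StoreSym Γ Q k))) :=
  { z | ∃ c₁ c₂, M.InitReach c₁ ∧ M.reachesFrom c₁ c₂ ∧ M.CoAcc c₂ ∧
      z = (confStr c₁).map some ++ none :: ((confStr c₂).map some).reverse }

end NPCM

/-! ### NCACM : one unrestricted counter plus `k` reversal-bounded counters -/

/-- A one-way nondeterministic machine with one unrestricted counter and `k`
reversal-bounded counters.  A transition reads the state, the input symbol (or
λ), the zero/nonzero status of the unrestricted counter and of each
reversal-bounded counter. -/
structure NCACM (α Q : Type) (k : ℕ) where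
  q0 : Q
  F : Set Q
  revBound : ℕ
  δ : Q → Option α → Bool → (Fin k → Bool) → Set (Q × SignType × (Fin k → SignType))

/-- A configuration of an NCACM: state, unrestricted counter value `cv`,
reversal-bounded counter values with bookkeeping. -/
structure AConfig (Q : Type) (k : ℕ) where
  st : Q
  cv : ℕ
  ctr : Fin k → ℕ
  dir : Fin k → Bool
  rev : Fin k → ℕ

namespace NCACM

variable {α Q : Type} {k : ℕ}

def initConfig (M : NCACM α Q k) : AConfig Q k :=
  ⟨M.q0, 0, fun _ => 0, fun _ => true, fun _ => 0⟩

def Step (M : NCACM α Q k) (a : Option α) (c c' : AConfig Q k) : Prop :=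
  ∃ e d, (c'.st, e, d) ∈ M.δ c.st a (decide (c.cv ≠ 0)) (fun i => decide (c.ctr i ≠ 0)) ∧
    ((e = SignType.neg ∧ c.cv ≠ 0 ∧ c'.cv = c.cv - 1) ∨
     (e = SignType.zero ∧ c'.cv = c.cv) ∨
     (e = SignType.pos ∧ c'.cv = c.cv + 1)) ∧
    ∀ i, ctrStep (c.ctr i) (c.dir i) (c.rev i) (d i) = some (c'.ctr i, c'.dir i, c'.rev i)
      ∧ c'.rev i ≤ M.revBound

inductive Reach (M : NCACM α Q k) : AConfig Q k → List α → AConfig Q k → Prop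
  | refl (c) : Reach M c [] c
  | lstep {c c' c'' w} : M.Step none c c' → Reach M c' w c'' → Reach M c w c''
  | rstep {c c' c'' a w} : M.Step (some a) c c' → Reach M c' w c'' → Reach M c (a :: w) c''

def reachesFrom (M : NCACM α Q k) (c c' : AConfig Q k) : Prop :=
  ∃ w, M.Reach c w c'

def InitReach (M : NCACM α Q k) (c : AConfig Q k) : Prop :=
  M.reachesFrom M.initConfig c

def CoAcc (M : NCACM α Q k) (c : AConfig Q k) : Prop :=
  ∃ c', M.reachesFrom c c' ∧ c'.st ∈ M.F

/-- The store-configuration string of an NCACM configuration: the state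
followed by the counter values in unary over distinct symbols (`Sum.inr 0` for
the unrestricted counter, `Sum.inr i.succ` for the `i`-th reversal-bounded
counter). -/
def confStr (c : AConfig Q k) : List (Q ⊕ Fin (k + 1)) :=
  Sum.inl c.st :: (List.replicate c.cv (Sum.inr 0) ++
    (List.finRange k).flatMap (fun i => List.replicate (c.ctr i) (Sum.inr i.succ)))

/-- The store language of an NCACM. -/
def storeLang (M : NCACM α Q k) : Set (List (Q ⊕ Fin (k + 1))) :=
  { x | ∃ c, M.InitReach c ∧ M.CoAcc c ∧ confStr c = x }

def PreStar (M : NCACM α Q k) (C : Set (List (Q ⊕ Fin (k + 1)))) :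
    Set (List (Q ⊕ Fin (k + 1))) :=
  { x | ∃ c c', confStr c = x ∧ M.reachesFrom c c' ∧ confStr c' ∈ C }

def PostStar (M : NCACM α Q k) (C : Set (List (Q ⊕ Fin (k + 1)))) :
    Set (List (Q ⊕ Fin (k + 1))) :=
  { y | ∃ c c', confStr c ∈ C ∧ M.reachesFrom c c' ∧ confStr c' = y }

end NCACM

/-! ### NSA : one-way nondeterministic stack automata -/

/-- Actions of a stack automaton: push a symbol (only at the top), pop (only at
the top, never popping `Z0`), move the stack head down or up inside the stack
(read-only), or keep the head in place. -/
inductive SAct (Γ : Type) where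
  | push : Γ → SAct Γ
  | pop : SAct Γ
  | up : SAct Γ
  | down : SAct Γ
  | stay : SAct Γ

/-- A one-way nondeterministic stack automaton.  A transition depends on the
state, the input symbol read (or λ), the stack symbol scanned by the stack
head, and whether the head is at the top of the stack. -/
structure NSA (α Γ Q : Type) where
  q0 : Q
  Z0 : Γ
  F : Set Q
  δ : Q → Option α → Γ → Bool → Set (Q × SAct Γ)

/-- A configuration of an NSA: state, stack contents (bottom first, so starting
with `Z0`), and the position of the stack head (`0` = bottom). -/
structure SConfig (Γ Q : Type) where
  st : Q
  stk : List Γ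
  pos : ℕ

namespace NSA

variable {α Γ Q : Type}

def initConfig (M : NSA α Γ Q) : SConfig Γ Q := ⟨M.q0, [M.Z0], 0⟩

def Step (M : NSA α Γ Q) (a : Option α) (c c' : SConfig Γ Q) : Prop :=
  ∃ X act, c.stk[c.pos]? = some X ∧
    (c'.st, act) ∈ M.δ c.st a X (decide (c.pos + 1 = c.stk.length)) ∧
    (match act with
     | SAct.push g => c.pos + 1 = c.stk.length ∧ c'.stk = c.stk ++ [g] ∧ c'.pos = c.pos + 1
     | SAct.pop => c.pos + 1 = c.stk.length ∧ X ≠ M.Z0 ∧ c'.stk = c.stk.dropLast ∧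
         c'.pos = c.pos - 1
     | SAct.up => c.pos + 1 < c.stk.length ∧ c'.stk = c.stk ∧ c'.pos = c.pos + 1
     | SAct.down => 0 < c.pos ∧ c'.stk = c.stk ∧ c'.pos = c.pos - 1
     | SAct.stay => c'.stk = c.stk ∧ c'.pos = c.pos)

inductive Reach (M : NSA α Γ Q) : SConfig Γ Q → List α → SConfig Γ Q → Prop
  | refl (c) : Reach M c [] c
  | lstep {c c' c'' w} : M.Step none c c' → Reach M c' w c'' → Reach M c w c''
  | rstep {c c' c'' a w} : M.Step (some a) c c' → Reach M c' w c'' → Reach M c (a :: w) c''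

def reachesFrom (M : NSA α Γ Q) (c c' : SConfig Γ Q) : Prop :=
  ∃ w, M.Reach c w c'

/-- The store-configuration string of an NSA configuration: the state followed
by the stack contents with the position of the stack head marked (the marker
`Sum.inr (Sum.inr ())` is placed immediately before the scanned symbol). -/
def confStr (c : SConfig Γ Q) : List (Q ⊕ Γ ⊕ Unit) :=
  Sum.inl c.st :: ((c.stk.take c.pos).map (fun X => Sum.inr (Sum.inl X)) ++
    Sum.inr (Sum.inr ()) :: (c.stk.drop c.pos).map (fun X => Sum.inr (Sum.inl X)))

def PreStar (M : NSA α Γ Q) (C : Set (List (Q ⊕ Γ ⊕ Unit))) :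
    Set (List (Q ⊕ Γ ⊕ Unit)) :=
  { x | ∃ c c', confStr c = x ∧ M.reachesFrom c c' ∧ confStr c' ∈ C }

def PostStar (M : NSA α Γ Q) (C : Set (List (Q ⊕ Γ ⊕ Unit))) :
    Set (List (Q ⊕ Γ ⊕ Unit)) :=
  { y | ∃ c c', confStr c ∈ C ∧ M.reachesFrom c c' ∧ confStr c' = y }

end NSA

/-! ### 2-tape NCMs -/

/-- A 2-tape NCM is an NCM whose reading moves read one symbol from either the
first tape (`(false, a)`) or the second tape (`(true, a)`): at most one input
head moves right in each step.  `Reach2 M c x y c'` means the machine can go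
from configuration `c` to `c'` consuming `x` on tape 1 and `y` on tape 2. -/
inductive Reach2 {α Q : Type} {k : ℕ} (M : NCM (Bool × α) Q k) :
    CConfig Q k → List α → List α → CConfig Q k → Prop
  | refl (c) : Reach2 M c [] [] c
  | lstep {c c' c'' x y} : M.Step none c c' → Reach2 M c' x y c'' → Reach2 M c x y c''
  | step1 {c c' c'' a x y} : M.Step (some (false, a)) c c' → Reach2 M c' x y c'' →
      Reach2 M c (a :: x) y c''
  | step2 {c c' c'' a x y} : M.Step (some (true, a)) c c' → Reach2 M c' x y c'' →
      Reach2 M c x (a :: y) c''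

/-- `Reach2N M n c x y c'` : same as `Reach2` but counting the number `n` of
transition steps used. -/
inductive Reach2N {α Q : Type} {k : ℕ} (M : NCM (Bool × α) Q k) :
    ℕ → CConfig Q k → List α → List α → CConfig Q k → Prop
  | refl (c) : Reach2N M 0 c [] [] c
  | lstep {n c c' c'' x y} : M.Step none c c' → Reach2N M n c' x y c'' →
      Reach2N M (n + 1) c x y c''
  | step1 {n c c' c'' a x y} : M.Step (some (false, a)) c c' → Reach2N M n c' x y c'' →
      Reach2N M (n + 1) c (a :: x) y c''
  | step2 {n c c' c'' a x y} : M.Step (some (true, a)) c c' → Reach2N M n c' x y c'' →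
      Reach2N M (n + 1) c x (a :: y) c''

/-- The set of pairs of words accepted by a 2-tape NCM. -/
def pairsAccepted {α Q : Type} {k : ℕ} (M : NCM (Bool × α) Q k) :
    Set (List α × List α) :=
  { p | ∃ c, Reach2 M M.initConfig p.1 p.2 c ∧ c.st ∈ M.F }

/-- `T` is accepted by some 2-tape NCM with finitely many states. -/
def IsNCM2Rel {α : Type} (T : Set (List α × List α)) : Prop :=
  ∃ (Q : Type) (_ : Fintype Q) (k : ℕ) (M : NCM (Bool × α) Q k), pairsAccepted M = T

/-! ### Multi-head NFAs -/

/-- An `h`-head NFA: `h` independent one-way read-only heads on a single input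
tape; a move depends on the symbols scanned by the heads (`none` = fallen off
the right end) and advances the heads with `mv i = true` by one cell. -/
structure MHNFA (α Q : Type) (h : ℕ) where
  q0 : Q
  F : Set Q
  δ : Q → (Fin h → Option α) → Set (Q × (Fin h → Bool))

namespace MHNFA

variable {α Q : Type} {h : ℕ}

def Step (M : MHNFA α Q h) (w : List α) (c c' : Q × (Fin h → ℕ)) : Prop :=
  ∃ mv, (c'.1, mv) ∈ M.δ c.1 (fun i => w[c.2 i]?) ∧
    ∀ i, c'.2 i = c.2 i + (if mv i then 1 else 0)

/-- The language of a multi-head NFA: all heads fall off the input in an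
accepting state. -/
def lang (M : MHNFA α Q h) : Set (List α) :=
  { w | ∃ c, Relation.ReflTransGen (M.Step w) (M.q0, fun _ => 0) c ∧
      c.1 ∈ M.F ∧ ∀ i, w.length ≤ c.2 i }

end MHNFA

/-- `L` is accepted by some multi-head NFA with finitely many states. -/
def IsMHNFALang {α : Type} (L : Set (List α)) : Prop :=
  ∃ (Q : Type) (_ : Fintype Q) (h : ℕ) (M : MHNFA α Q h), M.lang = L

/-! ### Generalized sequential machines -/

/-- A generalized sequential machine: a nondeterministic finite automaton which
outputs a word on each transition. -/
structure GSM (α β Q : Type) where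
  q0 : Q
  F : Set Q
  δ : Q → α → Set (Q × List β)
  finδ : ∀ q a, (δ q a).Finite

namespace GSM

variable {α β Q : Type}

/-- `Run g q w v q'` : reading `w` from state `q`, the gsm can output `v` and
end in state `q'`. -/
inductive Run (g : GSM α β Q) : Q → List α → List β → Q → Prop
  | refl (q) : Run g q [] [] q
  | step {q p q' a w out v} : (p, out) ∈ g.δ q a → Run g p w v q' →
      Run g q (a :: w) (out ++ v) q'

/-- The image `g(L)` of a language under a gsm. -/
def image (g : GSM α β Q) (L : Set (List α)) : Set (List β) :=
  { v | ∃ w ∈ L, ∃ qf ∈ g.F, g.Run g.q0 w v qf }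

end GSM

/-! ### Parikh maps, semilinearity, trios -/

/-- The Parikh map of a word. -/
def parikh {β : Type} [DecidableEq β] (w : List β) : β → ℕ := fun b => w.count b

/-- A language is semilinear iff its Parikh map equals the Parikh map of some
regular language. -/
def IsSemilinearLang {β : Type} [DecidableEq β] (L : Set (List β)) : Prop :=
  ∃ R : Set (List β), IsRegularLang R ∧ parikh '' L = parikh '' R

/-- Image of a language under (the extension of) a homomorphism. -/
def homImage {β γ : Type} (h : β → List γ) (L : Set (List β)) : Set (List γ) :=
  { v | ∃ w ∈ L, v = w.flatMap h }

/-- Inverse image of a language under (the extension of) a homomorphism. -/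
def homPreimage {β γ : Type} (h : β → List γ) (L : Set (List γ)) : Set (List β) :=
  { w | w.flatMap h ∈ L }

/-- A family of languages (one class of languages over every alphabet) is a
trio if it is closed under λ-free homomorphism, inverse homomorphism, and
intersection with regular languages. -/
def IsTrio (F : ∀ β : Type, Set (List β) → Prop) : Prop :=
  (∀ (β γ : Type) (h : β → List γ), (∀ b, h b ≠ []) → ∀ L, F β L → F γ (homImage h L)) ∧
  (∀ (β γ : Type) (h : β → List γ) (L : Set (List γ)), F γ L → F β (homPreimage h L)) ∧
  (∀ (β : Type) (L R : Set (List β)), F β L → IsRegularLang R → F β (L ∩ R))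

end StoreFormal
namespace StoreFormal
namespace Stmt4

variable {α Q : Type} {k : ℕ}

/-- The direction/reversal update performed by `ctrStep`, independent of the value. -/
def updO (b : Bool) (r : ℕ) : SignType → Option (Bool × ℕ)
  | SignType.zero => some (b, r)
  | SignType.pos => some (true, if b then r else r + 1)
  | SignType.neg => some (false, if b then r + 1 else r)

theorem ctrStep_updO {v : ℕ} {b : Bool} {r : ℕ} {s : SignType} {v' b' r'}
    (h : ctrStep v b r s = some (v', b', r')) : updO b r s = some (b', r') := by
  cases s
  · simp only [ctrStep, Option.some.injEq, Prod.mk.injEq] at h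
    simp [updO, h.2.1, h.2.2]
  · simp only [ctrStep] at h
    split at h
    · simp at h
    · simp only [Option.some.injEq, Prod.mk.injEq] at h
      cases b <;> simp_all [updO]
  · simp only [ctrStep, Option.some.injEq, Prod.mk.injEq] at h
    cases b <;> simp_all [updO]

theorem ctrStep_zero {v : ℕ} {b : Bool} {r : ℕ} {v' b' r'}
    (h : ctrStep v b r SignType.zero = some (v', b', r')) : v' = v ∧ b' = b ∧ r' = r := by
  simp [ctrStep] at h; tauto

theorem ctrStep_zero' (v : ℕ) (b : Bool) (r : ℕ) :
    ctrStep v b r SignType.zero = some (v, b, r) := rfl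

/-- The state set of the constructed NPCM. -/
abbrev QA (Q : Type) (k R : ℕ) : Type := (Q × (Fin k → Bool × Fin (R + 1))) ⊕ Bool

/-- The transition function of the constructed NPCM. -/
def mdelta (M : NCM α Q k) :
    QA Q k M.revBound → Option α → Option α → (Fin k → Bool) →
    Set (QA Q k M.revBound × Option (List (Option α)) × (Fin k → SignType))
  | Sum.inl (q, t), a, X, s =>
      { r | ∃ p d t', (p, d) ∈ M.δ q a s ∧
          (∀ i, updO (t i).1 ((t i).2 : ℕ) (d i) = some ((t' i).1, ((t' i).2 : ℕ))) ∧
          r = (Sum.inl (p, t'), some ((a.elim [] fun b => [some b]) ++ [X]), d) } ∪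
      { r | a = none ∧ q ∈ M.F ∧ r = (Sum.inr false, some [X], fun _ => SignType.zero) }
  | Sum.inr false, a, X, s =>
      { r | a = none ∧ ∃ i, s i = true ∧
          r = (Sum.inr false, some [X], fun j => if j = i then SignType.neg else SignType.zero) } ∪
      { r | a = none ∧ (∀ i, s i = false) ∧
          r = (Sum.inr true, some [X], fun _ => SignType.zero) }
  | Sum.inr true, _, _, _ => ∅

theorem mdelta_push (M : NCM α Q k) (q a X s p w d)
    (h : (p, some w, d) ∈ mdelta M q a X s) : ∃ u, w = u ++ [X] ∧ none ∉ u := by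
  rcases q with ⟨q, t⟩ | b
  · rcases h with ⟨p', d', t', _, _, heq⟩ | ⟨_, _, heq⟩
    · refine ⟨a.elim [] fun b => [some b], ?_, ?_⟩
      · have := congrArg (fun x => x.2.1) heq
        simp at this
        exact this
      · cases a <;> simp
    · have := congrArg (fun x => x.2.1) heq
      simp at this
      exact ⟨[], by simp [this]⟩
  · cases b
    · rcases h with ⟨_, i, _, heq⟩ | ⟨_, _, heq⟩ <;>
      · have := congrArg (fun x => x.2.1) heq
        simp at this
        exact ⟨[], by simp [this]⟩
    · exact absurd h (by simp [mdelta])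

/-- The constructed NPCM: it simulates `M`, pushing each input symbol onto the
pushdown, and after acceptance of `M` empties its counters and moves to the
final state `Sum.inr true`. -/
def mkM [Fintype Q] (M : NCM α Q k) : NPCM α (Option α) (QA Q k M.revBound) k where
  q0 := Sum.inl (M.q0, fun _ => (true, 0))
  Z0 := none
  F := {Sum.inr true}
  revBound := M.revBound + 1
  flipBound := 0
  δ := mdelta M
  finδ := by
    intro q a X s
    rcases q with ⟨q, t⟩ | b
    · apply Set.Finite.union
      · apply Set.Finite.subset (Set.finite_range
          (fun x : QA Q k M.revBound × (Fin k → SignType) =>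
            (x.1, some ((a.elim [] fun b => [some b]) ++ [X]), x.2)))
        rintro r ⟨p, d, t', -, -, rfl⟩
        exact ⟨(Sum.inl (p, t'), d), rfl⟩
      · apply Set.Finite.subset
          (Set.finite_singleton ((Sum.inr false : QA Q k M.revBound),
            some [X], fun _ => SignType.zero))
        rintro r ⟨-, -, rfl⟩
        rfl
    · cases b
      · apply Set.Finite.union
        · apply Set.Finite.subset (Set.finite_range
            (fun i : Fin k => ((Sum.inr false : QA Q k M.revBound), some [X],
              fun j => if j = i then SignType.neg else SignType.zero)))
          rintro r ⟨-, i, -, rfl⟩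
          exact ⟨i, rfl⟩
        · apply Set.Finite.subset
            (Set.finite_singleton ((Sum.inr true : QA Q k M.revBound),
              some [X], fun _ => SignType.zero))
          rintro r ⟨-, -, rfl⟩
          rfl
      · simp [mdelta]
  z0_bottom := by
    intro q a s p w d h
    exact mdelta_push M q a none s p w d h
  z0_inner := by
    intro q a X s p w d hX h
    rcases mdelta_push M q a X s p w d h with ⟨u, rfl, hu⟩
    simp [hX]
    exact ⟨hu, fun h => hX h.symm⟩


theorem reach_snoc {M : NCM α Q k} {c c' c'' : CConfig Q k} {w : List α} {a : Option α}
    (h : M.Reach c w c') (h2 : M.Step a c' c'') : M.Reach c (w ++ a.toList) c'' := by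
  induction h with
  | refl c =>
      cases a
      · exact NCM.Reach.lstep h2 (NCM.Reach.refl _)
      · exact NCM.Reach.rstep h2 (NCM.Reach.refl _)
  | lstep s _ ih => exact NCM.Reach.lstep s (ih h2)
  | rstep s _ ih => exact NCM.Reach.rstep s (ih h2)

theorem reach_trans {Γ Q' : Type} {M : NPCM α Γ Q' k} {c c' c'' : PConfig Γ Q' k}
    {w v : List α} (h : M.Reach c w c') (h2 : M.Reach c' v c'') : M.Reach c (w ++ v) c'' := by
  induction h with
  | refl c => exact h2
  | lstep s _ ih => exact NPCM.Reach.lstep s (ih h2)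
  | rstep s _ ih => exact NPCM.Reach.rstep s (ih h2)

/-- The invariant maintained along any computation of `mkM M`. -/
def Inv (M : NCM α Q k) (w : List α) (c : PConfig (Option α) (QA Q k M.revBound) k) : Prop :=
  c.stk = (w.map some).reverse ++ [none] ∧
  (∀ q t, c.st = Sum.inl (q, t) →
      M.Reach M.initConfig w ⟨q, c.ctr, c.dir, c.rev⟩ ∧
      ∀ i, (t i).1 = c.dir i ∧ ((t i).2 : ℕ) = c.rev i) ∧
  (c.st = Sum.inr false → w ∈ M.lang) ∧
  (c.st = Sum.inr true → w ∈ M.lang ∧ ∀ i, c.ctr i = 0)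

theorem inv_step [Fintype Q] {M : NCM α Q k} {w : List α} {a : Option α}
    {c c' : PConfig (Option α) (QA Q k M.revBound) k}
    (hInv : Inv M w c) (hs : (mkM M).Step a c c') : Inv M (w ++ a.toList) c' := by
  obtain ⟨X, rest, act, d, hstk, hδ, hctr, hflip, hact⟩ := hs
  obtain ⟨hstack, hinl, hfalse, htrue⟩ := hInv
  have hδ' : (c'.st, act, d) ∈ mdelta M c.st a X (fun i => decide (c.ctr i ≠ 0)) := hδ
  rcases hcst : c.st with ⟨q, t⟩ | b
  · rw [hcst] at hδ'
    rcases hδ' with ⟨p, d', t', hM, hupd, heq⟩ | ⟨rfl, hqF, heq⟩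
    · obtain ⟨h1, h2, h3⟩ : c'.st = Sum.inl (p, t') ∧
          act = some ((a.elim [] fun b => [some b]) ++ [X]) ∧ d = d' := by
        have e1 := congrArg Prod.fst heq
        have e2 := congrArg (fun x => x.2.1) heq
        have e3 := congrArg (fun x => x.2.2) heq
        exact ⟨e1, e2, e3⟩
      subst h3
      rw [h2] at hact
      obtain ⟨hstk', hflips'⟩ := hact
      have htrack := (hinl q t hcst).2
      have hreach := (hinl q t hcst).1
      -- counters
      have hctr' : ∀ i, ctrStep (c.ctr i) (c.dir i) (c.rev i) (d i)
          = some (c'.ctr i, c'.dir i, c'.rev i) := fun i => (hctr i).1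
      have hrevle : ∀ i, c'.rev i ≤ M.revBound := by
        intro i
        have hu := hupd i
        rw [(htrack i).1, (htrack i).2] at hu
        have := ctrStep_updO (hctr' i)
        rw [this] at hu
        simp only [Option.some.injEq, Prod.mk.injEq] at hu
        rw [hu.2]
        exact Fin.is_le _
      have hMstep : M.Step a ⟨q, c.ctr, c.dir, c.rev⟩ ⟨p, c'.ctr, c'.dir, c'.rev⟩ :=
        ⟨d, hM, fun i => ⟨hctr' i, hrevle i⟩⟩
      have htrack' : ∀ i, (t' i).1 = c'.dir i ∧ ((t' i).2 : ℕ) = c'.rev i := by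
        intro i
        have hu := hupd i
        rw [(htrack i).1, (htrack i).2] at hu
        rw [ctrStep_updO (hctr' i)] at hu
        simp only [Option.some.injEq, Prod.mk.injEq] at hu
        exact ⟨hu.1.symm, hu.2.symm⟩
      have hx : X :: rest = (List.map some w).reverse ++ [none] := hstk.symm.trans hstack
      refine ⟨?_, ?_, ?_, ?_⟩
      · rw [hstk']
        cases a <;> simp [hx]
      · intro q2 t2 hq2
        rw [h1] at hq2
        injection hq2 with hq2
        rw [Prod.mk.injEq] at hq2
        obtain ⟨e1, e2⟩ := hq2
        subst e1; subst e2
        exact ⟨reach_snoc hreach hMstep, htrack'⟩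
      · intro hc; rw [h1] at hc; exact absurd hc (by simp)
      · intro hc; rw [h1] at hc; exact absurd hc (by simp)
    · obtain ⟨h1, h2, h3⟩ : c'.st = Sum.inr false ∧ act = some [X] ∧
          d = fun _ => SignType.zero := by
        have e1 := congrArg Prod.fst heq
        have e2 := congrArg (fun x => x.2.1) heq
        have e3 := congrArg (fun x => x.2.2) heq
        exact ⟨e1, e2, e3⟩
      rw [h2] at hact
      obtain ⟨hstk', hflips'⟩ := hact
      have hwlang : w ∈ M.lang := ⟨⟨q, c.ctr, c.dir, c.rev⟩, (hinl q t hcst).1, hqF⟩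
      have hx : X :: rest = (List.map some w).reverse ++ [none] := hstk.symm.trans hstack
      refine ⟨by rw [hstk']; simpa using hx, ?_, ?_, ?_⟩
      · intro q2 t2 hq2; rw [h1] at hq2; exact absurd hq2 (by simp)
      · intro _; simpa using hwlang
      · intro hc; rw [h1] at hc; exact absurd hc (by simp)
  · cases b
    · rw [hcst] at hδ'
      rcases hδ' with ⟨rfl, i0, hs0, heq⟩ | ⟨rfl, hall, heq⟩
      · obtain ⟨h1, h2, h3⟩ : c'.st = Sum.inr false ∧ act = some [X] ∧
            d = fun j => if j = i0 then SignType.neg else SignType.zero := by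
          have e1 := congrArg Prod.fst heq
          have e2 := congrArg (fun x => x.2.1) heq
          have e3 := congrArg (fun x => x.2.2) heq
          exact ⟨e1, e2, e3⟩
        rw [h2] at hact
        obtain ⟨hstk', hflips'⟩ := hact
        have hx : X :: rest = (List.map some w).reverse ++ [none] := hstk.symm.trans hstack
        refine ⟨by rw [hstk']; simpa using hx, ?_, ?_, ?_⟩
        · intro q2 t2 hq2; rw [h1] at hq2; exact absurd hq2 (by simp)
        · intro _; simpa using hfalse hcst
        · intro hc; rw [h1] at hc; exact absurd hc (by simp)
      · obtain ⟨h1, h2, h3⟩ : c'.st = Sum.inr true ∧ act = some [X] ∧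
            d = fun _ => SignType.zero := by
          have e1 := congrArg Prod.fst heq
          have e2 := congrArg (fun x => x.2.1) heq
          have e3 := congrArg (fun x => x.2.2) heq
          exact ⟨e1, e2, e3⟩
        rw [h2] at hact
        obtain ⟨hstk', hflips'⟩ := hact
        have hz : ∀ i, c'.ctr i = 0 := by
          intro i
          have := (hctr i).1
          rw [h3] at this
          simp only at this
          have h0 : c.ctr i = 0 := by
            have := hall i
            simpa using this
          have := ctrStep_zero this
          omega
        have hx : X :: rest = (List.map some w).reverse ++ [none] := hstk.symm.trans hstack
        refine ⟨by rw [hstk']; simpa using hx, ?_, ?_, ?_⟩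
        · intro q2 t2 hq2; rw [h1] at hq2; exact absurd hq2 (by simp)
        · intro hc; rw [h1] at hc; exact absurd hc (by simp)
        · intro _; exact ⟨by simpa using hfalse hcst, hz⟩
    · rw [hcst] at hδ'
      exact absurd hδ' (by simp [mdelta])

theorem inv_reach [Fintype Q] {M : NCM α Q k}
    {c c' : PConfig (Option α) (QA Q k M.revBound) k} {w : List α}
    (h : (mkM M).Reach c w c') : ∀ v, Inv M v c → Inv M (v ++ w) c' := by
  induction h with
  | refl c => intro v hv; simpa using hv
  | lstep s _ ih =>
      intro v hv
      have := inv_step hv s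
      simpa using ih v (by simpa using this)
  | rstep s _ ih =>
      intro v hv
      have h1 := inv_step hv s
      have h2 := ih _ h1
      simpa using h2

theorem inv_init [Fintype Q] (M : NCM α Q k) : Inv M [] (mkM M).initConfig := by
  refine ⟨by simp [mkM, NPCM.initConfig], ?_, ?_, ?_⟩
  · intro q t hq
    simp only [mkM, NPCM.initConfig] at hq
    injection hq with hq
    obtain ⟨e1, e2⟩ : q = M.q0 ∧ t = fun _ => (true, 0) :=
      ⟨congrArg Prod.fst hq.symm, congrArg Prod.snd hq.symm⟩
    subst e1; subst e2
    exact ⟨NCM.Reach.refl _, fun i => ⟨rfl, rfl⟩⟩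
  · intro hq; exact absurd hq (by simp [mkM, NPCM.initConfig])
  · intro hq; exact absurd hq (by simp [mkM, NPCM.initConfig])


/-- Forward simulation of `M` by `mkM M`. -/
theorem fwd [Fintype Q] {M : NCM α Q k} {cM cM' : CConfig Q k} {w : List α}
    (h : M.Reach cM w cM') :
    ∀ (v : List α) (t : Fin k → Bool × Fin (M.revBound + 1)),
      (∀ i, (t i).1 = cM.dir i ∧ ((t i).2 : ℕ) = cM.rev i) →
      ∃ t', (∀ i, (t' i).1 = cM'.dir i ∧ ((t' i).2 : ℕ) = cM'.rev i) ∧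
        (mkM M).Reach
          ⟨Sum.inl (cM.st, t), (v.map some).reverse ++ [none], cM.ctr, cM.dir, cM.rev, 0⟩ w
          ⟨Sum.inl (cM'.st, t'), ((v ++ w).map some).reverse ++ [none],
            cM'.ctr, cM'.dir, cM'.rev, 0⟩ := by
  induction h with
  | refl c =>
      intro v t ht
      exact ⟨t, ht, by simpa using NPCM.Reach.refl _⟩
  | @lstep c c1 c2 w hs hr ih =>
      intro v t ht
      obtain ⟨d, hM, hctr⟩ := hs
      have hrle : ∀ i, c1.rev i ≤ M.revBound := fun i => (hctr i).2
      refine ⟨?_, ?_, ?_⟩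
      case _ => exact Classical.choose (ih v
        (fun i => (c1.dir i, ⟨c1.rev i, Nat.lt_succ_of_le (hrle i)⟩))
        (fun i => ⟨rfl, rfl⟩))
      case _ => exact (Classical.choose_spec (ih v
        (fun i => (c1.dir i, ⟨c1.rev i, Nat.lt_succ_of_le (hrle i)⟩))
        (fun i => ⟨rfl, rfl⟩))).1
      have hreach := (Classical.choose_spec (ih v
        (fun i => (c1.dir i, ⟨c1.rev i, Nat.lt_succ_of_le (hrle i)⟩))
        (fun i => ⟨rfl, rfl⟩))).2
      refine NPCM.Reach.lstep ?_ hreach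
      obtain ⟨X, rest, hXrest⟩ :
          ∃ X rest, (v.map some).reverse ++ [none] = X :: rest :=
        List.exists_cons_of_ne_nil (by simp)
      refine ⟨X, rest, some [X], d, hXrest, ?_, ?_, ?_, ?_⟩
      · refine Or.inl ⟨c1.st, d,
          (fun i => (c1.dir i, ⟨c1.rev i, Nat.lt_succ_of_le (hrle i)⟩)), hM, ?_, rfl⟩
        intro i
        rw [(ht i).1, (ht i).2]
        exact ctrStep_updO (hctr i).1
      · exact fun i => ⟨(hctr i).1, Nat.le_succ_of_le (hrle i)⟩
      · exact le_rfl
      · exact ⟨by simp [hXrest], rfl⟩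
  | @rstep c c1 c2 a w hs hr ih =>
      intro v t ht
      obtain ⟨d, hM, hctr⟩ := hs
      have hrle : ∀ i, c1.rev i ≤ M.revBound := fun i => (hctr i).2
      obtain ⟨t', ht', hreach⟩ := ih (v ++ [a])
        (fun i => (c1.dir i, ⟨c1.rev i, Nat.lt_succ_of_le (hrle i)⟩))
        (fun i => ⟨rfl, rfl⟩)
      refine ⟨t', ht', NPCM.Reach.rstep ?_ (by simpa using hreach)⟩
      obtain ⟨X, rest, hXrest⟩ :
          ∃ X rest, (v.map some).reverse ++ [none] = X :: rest :=
        List.exists_cons_of_ne_nil (by simp)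
      refine ⟨X, rest, some [some a, X], d, hXrest, ?_, ?_, ?_, ?_⟩
      · refine Or.inl ⟨c1.st, d,
          (fun i => (c1.dir i, ⟨c1.rev i, Nat.lt_succ_of_le (hrle i)⟩)), hM, ?_, rfl⟩
        intro i
        rw [(ht i).1, (ht i).2]
        exact ctrStep_updO (hctr i).1
      · exact fun i => ⟨(hctr i).1, Nat.le_succ_of_le (hrle i)⟩
      · exact le_rfl
      · exact ⟨by simp [hXrest], rfl⟩


/-- Draining the counters in the state `Sum.inr false`. -/
theorem drain [Fintype Q] {M : NCM α Q k} (n : ℕ) :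
    ∀ c : PConfig (Option α) (QA Q k M.revBound) k,
      (∑ i, c.ctr i) = n → c.st = Sum.inr false → c.flips = 0 → c.stk ≠ [] →
      (∀ i, c.rev i ≤ M.revBound + 1 ∧ (c.dir i = true → c.rev i ≤ M.revBound)) →
      ∃ c', (mkM M).Reach c [] c' ∧ c'.st = Sum.inr false ∧ c'.stk = c.stk ∧
        (∀ i, c'.ctr i = 0) ∧ c'.flips = 0 ∧ (∀ i, c'.rev i ≤ M.revBound + 1) := by
  induction n with
  | zero =>
      intro c hsum hst hfl _ hrev
      refine ⟨c, NPCM.Reach.refl c, hst, rfl, ?_, hfl, fun i => (hrev i).1⟩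
      intro i
      exact (Finset.sum_eq_zero_iff.mp hsum) i (Finset.mem_univ i)
  | succ n ih =>
      intro c hsum hst hfl hne hrev
      have hex : ∃ i, c.ctr i ≠ 0 := by
        by_contra hco
        push_neg at hco
        simp [hco] at hsum
      obtain ⟨i0, hi0⟩ := hex
      obtain ⟨X, rest, hXrest⟩ : ∃ X rest, c.stk = X :: rest := by
        rcases hc : c.stk with _ | ⟨X, rest⟩
        · exact absurd hc hne
        · exact ⟨X, rest, rfl⟩
      set c1 : PConfig (Option α) (QA Q k M.revBound) k :=
        ⟨Sum.inr false, c.stk, Function.update c.ctr i0 (c.ctr i0 - 1),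
          Function.update c.dir i0 false,
          Function.update c.rev i0 (if c.dir i0 then c.rev i0 + 1 else c.rev i0), 0⟩ with hc1
      have hstep : (mkM M).Step none c c1 := by
        refine ⟨X, rest, some [X],
          (fun j => if j = i0 then SignType.neg else SignType.zero), hXrest, ?_, ?_, ?_, ?_⟩
        · rw [hst]
          exact Or.inl ⟨rfl, i0, by simp [hi0], rfl⟩
        · intro i
          by_cases hii : i = i0
          · subst hii
            constructor
            · simp only [hc1, Function.update_self]
              simp [ctrStep, hi0]
            · simp only [hc1, Function.update_self]
              rcases hd : c.dir i with _ | _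
              · simpa [hd, mkM] using (hrev i).1
              · simpa [hd, mkM] using Nat.succ_le_succ ((hrev i).2 hd)
          · constructor
            · simp only [hc1, Function.update_of_ne hii, if_neg hii]
              exact ctrStep_zero' _ _ _
            · simp only [hc1, Function.update_of_ne hii]
              simpa [mkM] using (hrev i).1
        · exact le_rfl
        · exact ⟨by simp [hc1, hXrest], by simp [hc1, hfl]⟩
      have hsum1 : (∑ i, c1.ctr i) = n := by
        have h1 : (∑ j, Function.update c.ctr i0 (c.ctr i0 - 1) j)
            = (c.ctr i0 - 1) + ∑ j ∈ Finset.univ.erase i0, c.ctr j := by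
          rw [Finset.sum_update_of_mem (Finset.mem_univ i0)]
          congr 1
          apply Finset.sum_congr
          · ext j; simp [Finset.mem_erase, and_comm]
          · intros; rfl
        have h2 : (∑ j, c.ctr j) = c.ctr i0 + ∑ j ∈ Finset.univ.erase i0, c.ctr j :=
          (Finset.add_sum_erase _ _ (Finset.mem_univ i0)).symm
        simp only [hc1]
        omega
      have hrev1 : ∀ i, c1.rev i ≤ M.revBound + 1 ∧ (c1.dir i = true → c1.rev i ≤ M.revBound) := by
        intro i
        by_cases hii : i = i0
        · subst hii
          refine ⟨?_, ?_⟩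
          · simp only [hc1, Function.update_self]
            rcases hd : c.dir i with _ | _
            · simpa [hd] using (hrev i).1
            · simpa [hd] using Nat.succ_le_succ ((hrev i).2 hd)
          · intro hdd
            simp only [hc1, Function.update_self] at hdd
            simp at hdd
        · simp only [hc1, Function.update_of_ne hii]
          exact hrev i
      obtain ⟨c', hre, h1, h2, h3, h4, h5⟩ := ih c1 hsum1 rfl rfl
        (by simpa [hc1] using hne) hrev1
      exact ⟨c', NPCM.Reach.lstep hstep hre, h1, by rw [h2], h3, h4, h5⟩


theorem flat_zero {β γ : Type*} (l : List β) (g : β → γ) (f : β → ℕ) (hf : ∀ i, f i = 0) :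
    l.flatMap (fun i => List.replicate (f i) (g i)) = [] := by
  induction l <;> simp_all

theorem confStr_final {R : ℕ} (c : PConfig (Option α) (QA Q k R) k) (w : List α)
    (hst : c.st = Sum.inr true) (hstk : c.stk = (w.map some).reverse ++ [none])
    (hctr : ∀ i, c.ctr i = 0) :
    confStr c = Sum.inl (Sum.inr true) :: Sum.inr (Sum.inl none) ::
      w.map (fun a => Sum.inr (Sum.inl (some a))) := by
  simp [confStr, hst, hstk, flat_zero _ _ _ hctr, List.map_map, Function.comp]

end Stmt4
end StoreFormal

open StoreFormal in
/-- for every NCM `M` there are an NPCM `M'` whose pushdown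
makes zero reversals (it never pops) and a fixed word `f Z0` (a state of `M'`
followed by the bottom-of-stack marker) with `(f Z0)⁻¹ S(M') = L(M)` (with the
input alphabet embedded into the stack alphabet of `M'`). -/
theorem stmt_4 (α Q : Type) [Fintype α] [Fintype Q] (k : ℕ) (M : NCM α Q k) :
    ∃ (Q' : Type) (_ : Fintype Q') (k' : ℕ) (M' : NPCM α (Option α) Q' k') (f : Q'),
      M'.flipBound = 0 ∧ M'.Z0 = none ∧
      (∀ q a X s p w d, (p, some w, d) ∈ M'.δ q a X s → ∃ u, w = u ++ [X]) ∧
      leftQuot [Sum.inl f, Sum.inr (Sum.inl M'.Z0)] M'.storeLang =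
        (fun w : List α => w.map (fun a => (Sum.inr (Sum.inl (some a)) :
            StoreSym (Option α) Q' k'))) '' M.lang := by
  classical
  refine ⟨Stmt4.QA Q k M.revBound, inferInstance, k, Stmt4.mkM M, Sum.inr true, rfl, rfl,
    ?_, ?_⟩
  · intro q a X s p w d h
    obtain ⟨u, hu, -⟩ := Stmt4.mdelta_push M q a X s p w d h
    exact ⟨u, hu⟩
  · have hz : (Stmt4.mkM M).Z0 = none := rfl
    rw [hz]
    ext y
    simp only [leftQuot, Set.mem_setOf_eq, Set.mem_image, NPCM.storeLang]
    constructor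
    · rintro ⟨c, ⟨w, hreach⟩, hcoacc, hconf⟩
      have hinv : Stmt4.Inv M w c := by
        have := Stmt4.inv_reach hreach [] (Stmt4.inv_init M)
        simpa using this
      have hst : c.st = Sum.inr true := by
        have hh := congrArg List.head? hconf
        simp [confStr] at hh
        exact hh
      obtain ⟨hw, hctr0⟩ := hinv.2.2.2 hst
      have hcs := Stmt4.confStr_final c w hst hinv.1 hctr0
      rw [hcs] at hconf
      refine ⟨w, hw, ?_⟩
      simp only [List.cons_append, List.nil_append, List.cons.injEq, true_and] at hconf
      exact hconf
    · rintro ⟨w, hw, rfl⟩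
      obtain ⟨cM, hMr, hMF⟩ := hw
      obtain ⟨t', ht', hreach⟩ := Stmt4.fwd hMr [] (fun _ => (true, 0)) (fun i => ⟨rfl, rfl⟩)
      obtain ⟨X, rest, hXrest⟩ :
          ∃ X rest, ((List.map some w).reverse : List (Option α)) ++ [none] = X :: rest :=
        List.exists_cons_of_ne_nil (by simp)
      set L : List (Option α) := (List.map some w).reverse ++ [none] with hL
      set csim : PConfig (Option α) (Stmt4.QA Q k M.revBound) k :=
        ⟨Sum.inl (cM.st, t'), L, cM.ctr, cM.dir, cM.rev, 0⟩ with hcsim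
      set cd : PConfig (Option α) (Stmt4.QA Q k M.revBound) k :=
        ⟨Sum.inr false, L, cM.ctr, cM.dir, cM.rev, 0⟩ with hcd
      have hrevle : ∀ i, cM.rev i ≤ M.revBound := by
        intro i
        rw [← (ht' i).2]
        exact Fin.is_le _
      have stepd : (Stmt4.mkM M).Step none csim cd := by
        refine ⟨X, rest, some [X], fun _ => SignType.zero, hXrest, ?_, ?_, le_rfl,
          ⟨by simp [hcd, hXrest], rfl⟩⟩
        · exact Or.inr ⟨rfl, hMF, rfl⟩
        · exact fun i => ⟨Stmt4.ctrStep_zero' _ _ _, Nat.le_succ_of_le (hrevle i)⟩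
      obtain ⟨c', hre, hc'st, hc'stk, hc'ctr0, hc'fl, hc'rev⟩ :=
        Stmt4.drain (∑ i, cM.ctr i) cd rfl rfl rfl (by simp [hcd, hL])
          (fun i => ⟨Nat.le_succ_of_le (hrevle i), fun _ => hrevle i⟩)
      obtain ⟨X2, rest2, hX2⟩ : ∃ X2 rest2, c'.stk = X2 :: rest2 :=
        List.exists_cons_of_ne_nil (by rw [hc'stk]; simp [hcd, hL])
      set cf : PConfig (Option α) (Stmt4.QA Q k M.revBound) k :=
        ⟨Sum.inr true, c'.stk, c'.ctr, c'.dir, c'.rev, 0⟩ with hcf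
      have stepf : (Stmt4.mkM M).Step none c' cf := by
        refine ⟨X2, rest2, some [X2], fun _ => SignType.zero, hX2, ?_, ?_, le_rfl,
          ⟨by simp [hcf, hX2], hc'fl.symm⟩⟩
        · rw [hc'st]
          exact Or.inr ⟨rfl, by intro i; simp [hc'ctr0 i], rfl⟩
        · exact fun i => ⟨Stmt4.ctrStep_zero' _ _ _, hc'rev i⟩
      have hfull : (Stmt4.mkM M).Reach (Stmt4.mkM M).initConfig (w ++ []) cf :=
        Stmt4.reach_trans hreach
          (NPCM.Reach.lstep stepd (Stmt4.reach_trans hre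
            (NPCM.Reach.lstep stepf (NPCM.Reach.refl _))))
      refine ⟨cf, ⟨w ++ [], hfull⟩, ⟨cf, ⟨[], NPCM.Reach.refl _⟩, rfl⟩, ?_⟩
      have hcs := Stmt4.confStr_final cf w rfl (by rw [hcf]; rw [hc'stk]) hc'ctr0
      rw [hcs]
      simp
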